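/- Let p be a probability distribution on colors indexed by a finite set S, and define Q(i) = p_i^2 · ∑_{k≥0} (k+1)! · ∑_{J ⊆ S\{i}, |J|=k} ∏_{j∈J} p_j (the Method 2 pair-color probability). If p_i ≥ p_j > 0, then Q(i)/p_i^2 ≤ Q(j)/p_j^2. -/

import Mathlib

lemma aux_insert {ι : Type*} [DecidableEq ι] (p : ι → ℝ) (a : ι) (C : Finset ι)
    (ha : a ∉ C) (n : ℕ) :
    ∑ J ∈ Finset.powersetCard (n+1) (insert a C), ∏ l ∈ J, p l
      = (∑ J ∈ Finset.powersetCard (n+1) C, ∏ l ∈ J, p l)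
        + p a * ∑ J ∈ Finset.powersetCard n C, ∏ l ∈ J, p l := by
  rw [Finset.powersetCard_succ_insert ha, Finset.sum_union, Finset.mul_sum,
    Finset.sum_image]
  · congr 1
    refine Finset.sum_congr rfl fun J hJ => ?_
    have haJ : a ∉ J := fun h => ha ((Finset.mem_powersetCard.1 hJ).1 h)
    rw [Finset.prod_insert haJ]
  · intro J1 h1 J2 h2 h
    have haJ1 : a ∉ J1 := fun h => ha ((Finset.mem_powersetCard.1 h1).1 h)
    have haJ2 : a ∉ J2 := fun h => ha ((Finset.mem_powersetCard.1 h2).1 h)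
    rw [← Finset.erase_insert haJ1, ← Finset.erase_insert haJ2, h]
  · rw [Finset.disjoint_left]
    intro J hJ hJ'
    obtain ⟨J', hJ', rfl⟩ := Finset.mem_image.1 hJ'
    exact ha ((Finset.mem_powersetCard.1 hJ).1 (Finset.mem_insert_self a J'))

theorem stmt_2 {ι : Type*} [Fintype ι] [DecidableEq ι] (p : ι → ℝ)
    (hnn : ∀ l, 0 ≤ p l) (hsum : ∑ l, p l = 1) (i j : ι)
    (hij : p j ≤ p i) (hj : 0 < p j)
    (Q : ι → ℝ)
    (hQ : ∀ m, Q m = p m ^ 2 * ∑ k ∈ Finset.range (Fintype.card ι),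
      (Nat.factorial (k + 1) : ℝ) *
        ∑ J ∈ Finset.powersetCard k (Finset.univ.erase m), ∏ l ∈ J, p l) :
    Q i / p i ^ 2 ≤ Q j / p j ^ 2 := by
  have hi : 0 < p i := lt_of_lt_of_le hj hij
  rw [hQ i, hQ j, mul_div_cancel_left₀ _ (by positivity : (p i ^ 2 : ℝ) ≠ 0),
    mul_div_cancel_left₀ _ (by positivity : (p j ^ 2 : ℝ) ≠ 0)]
  by_cases hji : i = j
  · subst hji; rfl
  refine Finset.sum_le_sum fun k _ => ?_
  refine mul_le_mul_of_nonneg_left ?_ (by positivity)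
  set C : Finset ι := (Finset.univ.erase i).erase j with hC
  have hiC : i ∉ C := fun h => (Finset.mem_erase.1 (Finset.mem_erase.1 h).2).1 rfl
  have hjC : j ∉ C := fun h => (Finset.mem_erase.1 h).1 rfl
  have hA : Finset.univ.erase i = insert j C := by
    rw [hC, Finset.insert_erase]
    exact Finset.mem_erase.2 ⟨fun h => hji h.symm, Finset.mem_univ j⟩
  have hB : Finset.univ.erase j = insert i C := by
    rw [hC, Finset.erase_right_comm, Finset.insert_erase]
    exact Finset.mem_erase.2 ⟨hji, Finset.mem_univ i⟩
  rw [hA, hB]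
  cases k with
  | zero => simp
  | succ n =>
    rw [aux_insert p j C hjC n, aux_insert p i C hiC n]
    have hnn' : 0 ≤ ∑ J ∈ Finset.powersetCard n C, ∏ l ∈ J, p l :=
      Finset.sum_nonneg fun J _ => Finset.prod_nonneg fun l _ => hnn l
    exact add_le_add_right (mul_le_mul_of_nonneg_right hij hnn') _
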